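/- arXiv:1806.03599 — 2 statements merged into one kernel-verified Lean document; each statement's English description precedes it below -/
import Mathlib

section
/- Let R be a commutative Artinian ring with exactly n maximal ideals. Then R has exactly 2^n idempotents. -/
section aux

variable {R S : Type*}

/-- Idempotents transport along ring equivalences. -/
def idemEquivOfRingEquiv [CommRing R] [CommRing S] (e : R ≃+* S) :
    {x : R // IsIdempotentElem x} ≃ {y : S // IsIdempotentElem y} where
  toFun x := ⟨e x.1, by unfold IsIdempotentElem; rw [← map_mul, x.2]⟩
  invFun y := ⟨e.symm y.1, by unfold IsIdempotentElem; rw [← map_mul, y.2]⟩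
  left_inv x := Subtype.ext (e.symm_apply_apply x.1)
  right_inv y := Subtype.ext (e.apply_symm_apply y.1)

/-- Idempotents of a product ring are products of idempotents. -/
def idemPiEquiv {ι : Type*} (π : ι → Type*) [∀ i, CommRing (π i)] :
    {f : ∀ i, π i // IsIdempotentElem f} ≃ ∀ i, {x : π i // IsIdempotentElem x} where
  toFun f i := ⟨f.1 i, congrFun f.2 i⟩
  invFun g := ⟨fun i => (g i).1, funext fun i => (g i).2⟩
  left_inv _ := rfl
  right_inv _ := rfl

lemma card_idem_domain (K : Type*) [CommRing K] [IsDomain K] :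
    Nat.card {x : K // IsIdempotentElem x} = 2 := by
  have hs : {x : K | IsIdempotentElem x} = {0, 1} := by
    ext x
    simp [IsIdempotentElem.iff_eq_zero_or_one, Set.mem_insert_iff]
  calc Nat.card {x : K // IsIdempotentElem x}
      = ({x : K | IsIdempotentElem x} : Set K).ncard := Nat.card_coe_set_eq _
    _ = ({0, 1} : Set K).ncard := by rw [hs]
    _ = 2 := Set.ncard_pair zero_ne_one

end aux

theorem artinian_card_idempotents (R : Type*) [CommRing R] [IsArtinianRing R] (n : ℕ)
    (hn : Nat.card {I : Ideal R // I.IsMaximal} = n) :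
    Nat.card {e : R // IsIdempotentElem e} = 2 ^ n := by
  classical
  have hfin : Finite {I : Ideal R | I.IsMaximal} :=
    (IsArtinianRing.setOfPred_isMaximal_finite (R := R)).to_subtype
  have := Fintype.ofFinite {I : Ideal R | I.IsMaximal}
  set Q := R ⧸ nilradical R
  let f : R →+* Q := Ideal.Quotient.mk (nilradical R)
  have hker : ∀ x ∈ RingHom.ker f, IsNilpotent x := fun x hx => by
    rwa [RingHom.mem_ker, Ideal.Quotient.eq_zero_iff_mem, mem_nilradical] at hx
  -- the quotient map gives a bijection on idempotents
  let φ : {e : R // IsIdempotentElem e} → {e : Q // IsIdempotentElem e} :=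
    fun e => ⟨f e.1, by unfold IsIdempotentElem; rw [← map_mul, e.2]⟩
  have hφ : Function.Bijective φ := by
    constructor
    · rintro ⟨a, ha⟩ ⟨b, hb⟩ hab
      have hab' : f a = f b := congrArg Subtype.val hab
      obtain ⟨c, -, hu⟩ := existsUnique_isIdempotentElem_eq_of_ker_isNilpotent f hker (f a)
        ⟨a, rfl⟩ (by unfold IsIdempotentElem; rw [← map_mul, ha])
      exact Subtype.ext ((hu a ⟨ha, rfl⟩).trans (hu b ⟨hb, hab'.symm⟩).symm)
    · rintro ⟨y, hy⟩
      obtain ⟨x, hx, hfx⟩ := exists_isIdempotentElem_eq_of_ker_isNilpotent f hker y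
        (Ideal.Quotient.mk_surjective y) hy
      exact ⟨⟨x, hx⟩, Subtype.ext hfx⟩
  have h1 : Nat.card {e : R // IsIdempotentElem e} = Nat.card {e : Q // IsIdempotentElem e} :=
    Nat.card_congr (Equiv.ofBijective φ hφ)
  have h2 := Nat.card_congr
    ((idemEquivOfRingEquiv ((IsArtinianRing.quotNilradicalEquivPi R).toRingEquiv.trans
      (RingEquiv.piCongrLeft (fun I : {I : Ideal R | I.IsMaximal} => R ⧸ I.1)
        (MaximalSpectrum.equivSubtype R)))).trans
      (idemPiEquiv fun I : {I : Ideal R | I.IsMaximal} => R ⧸ I.1))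
  rw [h1, h2, Nat.card_pi]
  have h3 : ∀ I : {I : Ideal R | I.IsMaximal},
      Nat.card {x : R ⧸ I.1 // IsIdempotentElem x} = 2 := fun I => by
    have : I.1.IsMaximal := I.2
    have : I.1.IsPrime := this.isPrime
    exact card_idem_domain _
  calc (∏ I : {I : Ideal R | I.IsMaximal}, Nat.card {x : R ⧸ I.1 // IsIdempotentElem x})
      = ∏ _I : {I : Ideal R | I.IsMaximal}, 2 :=
        Finset.prod_congr rfl fun I _ => h3 I
    _ = 2 ^ Nat.card {I : Ideal R | I.IsMaximal} := by
        rw [Finset.prod_const, Finset.card_univ, Nat.card_eq_fintype_card]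
    _ = 2 ^ n := by
        rw [← hn]
        exact congrArg (2 ^ ·) (Nat.card_congr (Equiv.subtypeEquivRight fun _ => Iff.rfl))
end

section
/- Let R be a commutative Artinian ring with distinct maximal ideals m_1, ..., m_n, and N with J^N = 0 where J is the Jacobson radical. Then f ∈ R is idempotent if and only if f = Σ_{k=1}^n h_k ε_k for some ε_k ∈ {0,1}, where h_k ∈ ∏_{i≠k} m_i^N and h_k - 1 ∈ m_k^N. -/
private lemma inf_le_prod_of_coprime {R : Type*} [CommRing R] {ι : Type*} [DecidableEq ι]
    (I : ι → Ideal R) (s : Finset ι)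
    (h : ∀ i ∈ s, ∀ j ∈ s, i ≠ j → IsCoprime (I i) (I j)) :
    (⨅ i ∈ s, I i) ≤ ∏ i ∈ s, I i := by
  classical
  induction s using Finset.induction_on with
  | empty => simp
  | @insert a s ha ih =>
    have hcop : IsCoprime (I a) (∏ i ∈ s, I i) :=
      IsCoprime.prod_right fun j hj =>
        h a (Finset.mem_insert_self a s) j (Finset.mem_insert_of_mem hj)
          (by rintro rfl; exact ha hj)
    rw [Finset.prod_insert ha, ← Ideal.inf_eq_mul_of_isCoprime hcop]
    rw [Finset.iInf_insert]
    exact inf_le_inf_left _ (ih fun i hi j hj hij =>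
      h i (Finset.mem_insert_of_mem hi) j (Finset.mem_insert_of_mem hj) hij)

theorem artinian_idempotent_iff (R : Type*) [CommRing R] [IsArtinianRing R] (n : ℕ)
    (m : Fin n → Ideal R) (hmax : ∀ i, (m i).IsMaximal) (hinj : Function.Injective m)
    (hall : ∀ I : Ideal R, I.IsMaximal → ∃ i, I = m i)
    (N : ℕ) (hN : (⊥ : Ideal R).jacobson ^ N = ⊥) (f : R) :
    IsIdempotentElem f ↔
      ∃ ε h : Fin n → R,
        (∀ k, ε k = 0 ∨ ε k = 1) ∧
        (∀ k, h k ∈ ∏ i ∈ Finset.univ.erase k, (m i) ^ N ∧ h k - 1 ∈ (m k) ^ N) ∧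
        f = ∑ k, h k * ε k := by
  classical
  by_cases hsub : Subsingleton R
  · have hz : ∀ (x : R) (I : Ideal R), x ∈ I := fun x I => by
      rw [Subsingleton.elim x 0]; exact I.zero_mem
    constructor
    · intro _
      exact ⟨0, 0, fun k => Or.inl rfl, fun k => ⟨hz _ _, hz _ _⟩, Subsingleton.elim _ _⟩
    · intro _
      exact Subsingleton.elim _ _
  have : Nontrivial R := not_subsingleton_iff_nontrivial.mp hsub
  -- N ≥ 1
  obtain ⟨N, rfl⟩ : ∃ N', N = N' + 1 := by
    cases N with
    | zero =>
      exfalso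
      simp only [pow_zero, Ideal.one_eq_top] at hN
      have h1 : (1 : R) ∈ (⊥ : Ideal R) := hN ▸ Submodule.mem_top
      exact one_ne_zero ((Submodule.mem_bot R).mp h1)
    | succ k => exact ⟨k, rfl⟩
  set Nn := N + 1 with hNn
  -- pairwise coprimality
  have hcop : ∀ i j : Fin n, i ≠ j → IsCoprime ((m i) ^ Nn) ((m j) ^ Nn) := by
    intro i j hij
    exact (Ideal.isCoprime_iff_sup_eq.mpr ((hmax i).coprime_of_ne (hmax j) (hinj.ne hij))).pow
  -- product of all maximal ideals is contained in the Jacobson radical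
  have hprodle : (∏ i, m i) ≤ (⊥ : Ideal R).jacobson := by
    apply le_sInf
    rintro J ⟨-, hJ⟩
    obtain ⟨i, rfl⟩ := hall J hJ
    calc (∏ j, m j) = m i * ∏ j ∈ Finset.univ.erase i, m j :=
          (Finset.mul_prod_erase _ _ (Finset.mem_univ i)).symm
      _ ≤ m i := Ideal.mul_le_left
  -- the key vanishing lemma
  have hzero : ∀ x : R, (∀ k, x ∈ (m k) ^ Nn) → x = 0 := by
    intro x hx
    have h1 : x ∈ ⨅ k ∈ Finset.univ, (m k) ^ Nn := by
      simp only [Submodule.mem_iInf]; intro k _; exact hx k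
    have h2 : x ∈ ∏ k, (m k) ^ Nn :=
      inf_le_prod_of_coprime _ _ (fun i _ j _ hij => hcop i j hij) h1
    rw [Finset.prod_pow] at h2
    have h3 : (∏ k, m k) ^ Nn ≤ (⊥ : Ideal R) := by
      rw [← hN]
      exact Ideal.pow_right_mono hprodle _
    simpa using h3 h2
  -- membership of f - ε in m k ^ Nn for idempotent f
  have hfe : ∀ (g : R), IsIdempotentElem g → ∀ k,
      g - (if g ∈ m k then (0:R) else 1) ∈ (m k) ^ Nn := by
    intro g hg k
    by_cases hgk : g ∈ m k
    · simp only [hgk, if_pos, sub_zero]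
      have : g ^ Nn ∈ (m k) ^ Nn := Ideal.pow_mem_pow hgk Nn
      rwa [hg.pow_succ_eq] at this
    · simp only [hgk, if_neg, not_false_iff]
      have h1f : (1 - g) ∈ m k := by
        have hmul : g * (1 - g) = 0 := by rw [mul_sub, mul_one, hg.eq, sub_self]
        rcases (hmax k).isPrime.mem_or_mem (hmul ▸ (Submodule.zero_mem (m k))) with h | h
        · exact absurd h hgk
        · exact h
      have : (1 - g) ^ Nn ∈ (m k) ^ Nn := Ideal.pow_mem_pow h1f Nn
      rwa [hg.one_sub.pow_succ_eq, show (1:R) - g = -(g - 1) by ring, neg_mem_iff] at this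
  constructor
  · -- forward
    intro hf
    choose h hh using fun k : Fin n =>
      Ideal.exists_forall_sub_mem_ideal (I := fun i => (m i) ^ Nn)
        (fun i j hij => hcop i j hij) (fun i => if i = k then (1:R) else 0)
    refine ⟨fun k => if f ∈ m k then 0 else 1, h, fun k => by by_cases hk : f ∈ m k <;> simp [hk],
      fun k => ⟨?_, by simpa using hh k k⟩, ?_⟩
    · -- h k ∈ ∏_{i ≠ k} m i ^ Nn
      apply inf_le_prod_of_coprime _ _ (fun i _ j _ hij => hcop i j hij)
      simp only [Submodule.mem_iInf]
      intro i hi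
      have := hh k i
      rw [if_neg (Finset.ne_of_mem_erase hi), sub_zero] at this
      exact this
    · -- f = sum
      apply sub_eq_zero.mp
      apply hzero
      intro k
      set ε : Fin n → R := fun k => if f ∈ m k then 0 else 1 with hε
      have hsum : (∑ j, h j * ε j) - ε k ∈ (m k) ^ Nn := by
        rw [← Finset.mul_prod_erase _ _ (Finset.mem_univ k)] at *
        have heq : (∑ j, h j * ε j) - ε k
            = (h k - 1) * ε k + ∑ j ∈ Finset.univ.erase k, h j * ε j := by
          rw [← Finset.add_sum_erase _ _ (Finset.mem_univ k)]; ring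
        rw [heq]
        apply Submodule.add_mem
        · exact Ideal.mul_mem_right _ _ (by simpa using hh k k)
        · apply Submodule.sum_mem
          intro j hj
          apply Ideal.mul_mem_right
          have := hh j k
          rw [if_neg (Finset.ne_of_mem_erase hj).symm, sub_zero] at this
          exact this
      have := Submodule.sub_mem _ (hfe f hf k) hsum
      exact (sub_sub_sub_cancel_right f (∑ j, h j * ε j) (ε k)) ▸
        (this : (f - ε k) - (∑ j, h j * ε j - ε k) ∈ (m k) ^ Nn)
  · -- backward
    rintro ⟨ε, h, hε, hh, rfl⟩
    set g := ∑ k, h k * ε k with hg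
    apply sub_eq_zero.mp
    apply hzero
    intro k
    have hjk : ∀ j, j ≠ k → h j ∈ (m k) ^ Nn := by
      intro j hjne
      have h1 : h j ∈ ∏ i ∈ Finset.univ.erase j, (m i) ^ Nn := (hh j).1
      have h2 : (∏ i ∈ Finset.univ.erase j, (m i) ^ Nn) ≤ (m k) ^ Nn := by
        rw [← Finset.mul_prod_erase _ _ (Finset.mem_erase.mpr ⟨hjne.symm, Finset.mem_univ k⟩)]
        exact Ideal.mul_le_left
      exact h2 h1
    have hgε : g - ε k ∈ (m k) ^ Nn := by
      have heq : g - ε k = (h k - 1) * ε k + ∑ j ∈ Finset.univ.erase k, h j * ε j := by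
        rw [hg, ← Finset.add_sum_erase _ _ (Finset.mem_univ k)]; ring
      rw [heq]
      exact Submodule.add_mem _ (Ideal.mul_mem_right _ _ (hh k).2)
        (Submodule.sum_mem _ fun j hj =>
          Ideal.mul_mem_right _ _ (hjk j (Finset.ne_of_mem_erase hj)))
    have hεid : ε k * ε k = ε k := by rcases hε k with h0 | h0 <;> simp [h0]
    have : g * g - g = (g - ε k) * (g + ε k - 1) + (ε k * ε k - ε k) := by ring
    rw [this, hεid, sub_self, add_zero]
    exact Ideal.mul_mem_right _ _ hgε
end
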